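/- Let R be an invertible N²×N² complex matrix, 𝒜 an associative unital ℂ-algebra, and C a fixed N×N complex matrix such that for every N×N matrix A with entries in 𝒜 the identities Tr_{R(2)}(R₁₂·A₁·R₁₂⁻¹) = (Tr_R A)·I_N and Tr_{R(2)}(R₁₂⁻¹·A₁·R₁₂) = (Tr_R A)·I_N hold, where A₁ = A⊗I_N. If an N×N matrix L with entries in 𝒜 satisfies the reflection equation R·L₁·R·L₁ = L₁·R·L₁·R, then for every integer k ≥ 1 the element Tr_R(Lᵏ) ∈ 𝒜 commutes with L, i.e. L·(Tr_R Lᵏ) = (Tr_R Lᵏ)·L as N×N matrices over 𝒜. -/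
import Mathlib


open Matrix

/-- For an `N×N` matrix `X` with entries in `A`, `leg1 X = X ⊗ I_N` as an `N²×N²` matrix. -/
def leg1 {N : ℕ} {A : Type*} [Semiring A] (X : Matrix (Fin N) (Fin N) A) :
    Matrix (Fin N × Fin N) (Fin N × Fin N) A :=
  Matrix.of fun a b => X a.1 b.1 * (if a.2 = b.2 then 1 else 0)

/-- Embedding of a complex matrix into matrices over a `ℂ`-algebra `A`. -/
def emb {n : Type*} {A : Type*} [Semiring A] [Algebra ℂ A] (R : Matrix n n ℂ) :
    Matrix n n A :=
  R.map (algebraMap ℂ A)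

/-- The `R`-trace associated with the weight matrix `C`:
`Tr_R X = Σ_{i,j} C^i_j X^j_i`. -/
def trR {N : ℕ} {A : Type*} [Ring A] [Algebra ℂ A]
    (C : Matrix (Fin N) (Fin N) ℂ) (X : Matrix (Fin N) (Fin N) A) : A :=
  ∑ i, ∑ j, C i j • X j i

/-- The partial `R`-trace over the second tensor factor:
`(Tr_{R(2)} M)^j_i = Σ_{a,b} C^a_b M^{(j,b)}_{(i,a)}`. -/
def trR2 {N : ℕ} {A : Type*} [Ring A] [Algebra ℂ A]
    (C : Matrix (Fin N) (Fin N) ℂ) (M : Matrix (Fin N × Fin N) (Fin N × Fin N) A) :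
    Matrix (Fin N) (Fin N) A :=
  Matrix.of fun r s => ∑ a, ∑ b, C a b • M (r, b) (s, a)

lemma leg1_mul {N : ℕ} {A : Type*} [Ring A] (X Y : Matrix (Fin N) (Fin N) A) :
    leg1 (X * Y) = leg1 X * leg1 Y := by
  ext a b
  simp [leg1, Matrix.mul_apply, Fintype.sum_prod_type, mul_ite, ite_mul,
    Finset.sum_ite_eq, Finset.sum_ite_eq', Finset.sum_mul, Finset.mul_sum]

lemma leg1_pow {N : ℕ} {A : Type*} [Ring A] (X : Matrix (Fin N) (Fin N) A) (k : ℕ) :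
    leg1 (X ^ k) = leg1 X ^ k := by
  induction k with
  | zero =>
    ext a b
    simp [leg1, Matrix.one_apply, Prod.ext_iff]
    split <;> simp_all
  | succ n ih => rw [pow_succ, pow_succ, leg1_mul, ih]

lemma trR2_mul_leg1 {N : ℕ} {A : Type*} [Ring A] [Algebra ℂ A]
    (C : Matrix (Fin N) (Fin N) ℂ) (M : Matrix (Fin N × Fin N) (Fin N × Fin N) A)
    (X : Matrix (Fin N) (Fin N) A) :
    trR2 C (M * leg1 X) = trR2 C M * X := by
  ext r s
  simp only [trR2, leg1, Matrix.mul_apply, Matrix.of_apply, Fintype.sum_prod_type,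
    mul_ite, ite_mul, mul_one, mul_zero, one_mul, zero_mul, smul_ite, smul_zero,
    Finset.sum_ite_eq, Finset.sum_ite_eq',
    Finset.mem_univ, if_true, Finset.smul_sum, Finset.sum_mul, smul_mul_assoc]
  conv_rhs => rw [Finset.sum_comm]
  exact Finset.sum_congr rfl fun a _ => Finset.sum_comm

lemma leg1_mul_trR2 {N : ℕ} {A : Type*} [Ring A] [Algebra ℂ A]
    (C : Matrix (Fin N) (Fin N) ℂ) (M : Matrix (Fin N × Fin N) (Fin N × Fin N) A)
    (X : Matrix (Fin N) (Fin N) A) :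
    trR2 C (leg1 X * M) = X * trR2 C M := by
  ext r s
  simp only [trR2, leg1, Matrix.mul_apply, Matrix.of_apply, Fintype.sum_prod_type,
    mul_ite, ite_mul, mul_one, mul_zero, one_mul, zero_mul, smul_ite, smul_zero,
    Finset.sum_ite_eq, Finset.sum_ite_eq',
    Finset.mem_univ, if_true, Finset.smul_sum, Finset.mul_sum, mul_smul_comm]
  conv_rhs => rw [Finset.sum_comm]
  exact Finset.sum_congr rfl fun a _ => Finset.sum_comm

/-- if the weight matrix `C` satisfies the (Ogievetsky) identities
`Tr_{R(2)}(R₁₂ A₁ R₁₂⁻¹) = (Tr_R A)·I = Tr_{R(2)}(R₁₂⁻¹ A₁ R₁₂)`, then in any algebra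
whose generating matrix `L` satisfies the reflection equation the quantum power sums
`Tr_R Lᵏ` commute with `L`. -/
theorem power_sums_commute {N : ℕ} {A : Type*} [Ring A] [Algebra ℂ A]
    (R : Matrix (Fin N × Fin N) (Fin N × Fin N) ℂ)
    (hR : IsUnit R)
    (C : Matrix (Fin N) (Fin N) ℂ)
    (hOleg1 : ∀ X : Matrix (Fin N) (Fin N) A,
      trR2 C (emb R * leg1 X * emb R⁻¹) = trR C X • (1 : Matrix (Fin N) (Fin N) A))
    (hOleg2 : ∀ X : Matrix (Fin N) (Fin N) A,
      trR2 C (emb R⁻¹ * leg1 X * emb R) = trR C X • (1 : Matrix (Fin N) (Fin N) A))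
    (L : Matrix (Fin N) (Fin N) A)
    (hRE : emb R * leg1 L * emb R * leg1 L = leg1 L * emb R * leg1 L * emb R)
    (k : ℕ) (hk : 1 ≤ k) :
    L * (trR C (L ^ k) • (1 : Matrix (Fin N) (Fin N) A)) =
      (trR C (L ^ k) • (1 : Matrix (Fin N) (Fin N) A)) * L := by
  set e : Matrix (Fin N × Fin N) (Fin N × Fin N) A := emb R with he
  set e' : Matrix (Fin N × Fin N) (Fin N × Fin N) A := emb R⁻¹ with he'
  set X : Matrix (Fin N × Fin N) (Fin N × Fin N) A := leg1 L with hX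
  have hdet : IsUnit R.det := (Matrix.isUnit_iff_isUnit_det R).mp hR
  have hee' : e * e' = 1 := by
    rw [he, he', emb, emb, ← Matrix.map_mul, Matrix.mul_nonsing_inv R hdet, Matrix.map_one _
      (map_zero _) (map_one _)]
  have he'e : e' * e = 1 := by
    rw [he, he', emb, emb, ← Matrix.map_mul, Matrix.nonsing_inv_mul R hdet, Matrix.map_one _
      (map_zero _) (map_one _)]
  -- reflection relation in conjugated form: X (e X e') = e' X e X
  have hrel : X * (e * X * e') = e' * (X * e * X) := by
    have h1 : e' * (e * X * e * X) * e' = e' * (X * e * X * e) * e' := by rw [hRE]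
    calc X * (e * X * e') = (e' * e) * X * e * X * e' := by rw [he'e]; noncomm_ring
      _ = e' * (e * X * e * X) * e' := by noncomm_ring
      _ = e' * (X * e * X * e) * e' := h1
      _ = e' * (X * e * X) * (e * e') := by noncomm_ring
      _ = e' * (X * e * X) := by rw [hee']; rw [mul_one]
  -- key induction: X * (e X e')^n = e' * X^n * e * X
  have hkey : ∀ n : ℕ, X * (e * X * e') ^ n = e' * X ^ n * e * X := by
    intro n
    induction n with
    | zero => simp [he'e, mul_assoc]
    | succ m ih =>
      calc X * (e * X * e') ^ (m + 1) = (X * (e * X * e') ^ m) * (e * X * e') := by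
            rw [pow_succ]; noncomm_ring
        _ = e' * X ^ m * e * (X * (e * X * e')) := by rw [ih]; noncomm_ring
        _ = e' * X ^ m * e * (e' * (X * e * X)) := by rw [hrel]
        _ = e' * X ^ m * (e * e') * (X * e * X) := by noncomm_ring
        _ = e' * X ^ (m + 1) * e * X := by rw [hee', mul_one, pow_succ]; noncomm_ring
  -- conjugated powers
  have hconj : ∀ n : ℕ, (e * X * e') ^ n = e * X ^ n * e' := by
    intro n
    induction n with
    | zero => simp [hee', mul_assoc]
    | succ m ih =>
      calc (e * X * e') ^ (m + 1) = (e * X ^ m * e') * (e * X * e') := by rw [pow_succ, ih]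
        _ = e * X ^ m * (e' * e) * X * e' := by noncomm_ring
        _ = e * X ^ (m + 1) * e' := by rw [he'e, mul_one, pow_succ]; noncomm_ring
  have h1 := hOleg1 (L ^ k)
  have h2 := hOleg2 (L ^ k)
  rw [leg1_pow] at h1 h2
  calc L * (trR C (L ^ k) • (1 : Matrix (Fin N) (Fin N) A))
      = L * trR2 C (e * X ^ k * e') := by rw [h1]
    _ = trR2 C (X * (e * X ^ k * e')) := by rw [leg1_mul_trR2]
    _ = trR2 C (X * (e * X * e') ^ k) := by rw [hconj]
    _ = trR2 C (e' * X ^ k * e * X) := by rw [hkey]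
    _ = trR2 C ((e' * X ^ k * e) * leg1 L) := by rw [hX]
    _ = trR2 C (e' * X ^ k * e) * L := by rw [trR2_mul_leg1]
    _ = (trR C (L ^ k) • (1 : Matrix (Fin N) (Fin N) A)) * L := by rw [h2]
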